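/- (Degenerate-direction projection bound for a prism-like element) Let K̂ ⊂ ℝ³ be a convex polyhedron with a face F̂ in the plane {x₃=0} whose vertical projection onto that plane is F̂, with supporting height l. Then for u ∈ H¹(K̂) and v = u − P⁰_{F̂}u (where P⁰_{F̂}u is the mean of the trace of u on F̂), ‖v‖_{L²(K̂)} ≤ √2 l^{1/2} ‖v‖_{L²(F̂)} + √2 l ‖∇u‖_{L²(K̂)}. -/

import Mathlib

open MeasureTheory


noncomputable section Stmt15Aux

abbrev E3' : Type := EuclideanSpace ℝ (Fin 3)
abbrev E2' : Type := EuclideanSpace ℝ (Fin 2)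
abbrev P2' : Type := Fin 2 → ℝ

def Phi15 : E3' ≃ᵐ ℝ × P2' :=
  ((MeasurableEquiv.toLp 2 (Fin 3 → ℝ)).symm).trans (MeasurableEquiv.piFinSuccAbove (fun _ => ℝ) 2)

lemma Phi15_mp :
    MeasurePreserving Phi15 volume ((volume : Measure ℝ).prod (volume : Measure P2')) :=
  (EuclideanSpace.volume_preserving_symm_measurableEquiv_toLp (Fin 3)).trans
    (volume_preserving_piFinSuccAbove (fun _ : Fin 3 => ℝ) 2)

lemma Phi15_symm_two (t : ℝ) (p : P2') : (Phi15.symm (t, p)) 2 = t := by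
  simp [Phi15, MeasurableEquiv.trans, MeasurableEquiv.piFinSuccAbove]

lemma Phi15_symm_zero (t : ℝ) (p : P2') : (Phi15.symm (t, p)) 0 = p 0 := by
  simp [Phi15, MeasurableEquiv.trans, MeasurableEquiv.piFinSuccAbove]
  have : (0 : Fin 3) = Fin.succAbove 2 0 := rfl
  rw [this, Fin.insertNth_apply_succAbove]

lemma Phi15_symm_one (t : ℝ) (p : P2') : (Phi15.symm (t, p)) 1 = p 1 := by
  simp [Phi15, MeasurableEquiv.trans, MeasurableEquiv.piFinSuccAbove]
  have : (1 : Fin 3) = Fin.succAbove 2 1 := rfl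
  rw [this, Fin.insertNth_apply_succAbove]

lemma Phi15_symm_decomp (t : ℝ) (p : P2') :
    Phi15.symm (t, p) = Phi15.symm (0, p) + t • (EuclideanSpace.single (2 : Fin 3) (1:ℝ)) := by
  ext i
  rw [PiLp.add_apply, PiLp.smul_apply, EuclideanSpace.single_apply]
  fin_cases i <;>
    simp [Phi15_symm_zero, Phi15_symm_one, Phi15_symm_two]

lemma Phi15_symm_surj (x : E3') : Phi15.symm (x 2, (Phi15 x).2) = x := by
  have : Phi15 x = (x 2, (Phi15 x).2) := by
    apply Prod.ext
    · simp [Phi15, MeasurableEquiv.trans, MeasurableEquiv.piFinSuccAbove]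
    · rfl
  rw [← this, MeasurableEquiv.symm_apply_apply]

lemma Phi15_cont_symm : Continuous (fun z : ℝ × P2' => (Phi15.symm z : E3')) := by
  have h : Continuous (fun z : ℝ × P2' => (Fin.insertNth (2 : Fin 3) z.1 z.2 : Fin 3 → ℝ)) :=
    Continuous.finInsertNth (A := fun _ : Fin 3 => ℝ) 2 continuous_fst continuous_snd
  exact (PiLp.continuous_toLp 2 (fun _ : Fin 3 => ℝ)).comp h

lemma Phi15_cont : Continuous (⇑Phi15 : E3' → ℝ × P2') := by
  have h2 : Continuous (fun x : E3' => (WithLp.equiv 2 (Fin 3 → ℝ)) x) :=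
    PiLp.continuous_ofLp 2 (fun _ : Fin 3 => ℝ)
  have : (⇑Phi15 : E3' → ℝ × P2') = fun x : E3' =>
      ((WithLp.equiv 2 (Fin 3 → ℝ)) x 2,
        fun j : Fin 2 => (WithLp.equiv 2 (Fin 3 → ℝ)) x (Fin.succAbove 2 j)) := rfl
  rw [this]
  exact ((continuous_apply (2 : Fin 3)).comp h2).prodMk
    (continuous_pi fun j => (continuous_apply _).comp h2)

def m2' : E2' ≃ᵐ P2' := (MeasurableEquiv.toLp 2 (Fin 2 → ℝ)).symm

def psi15 : E2' → E3' := fun z => Phi15.symm (0, m2' z)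

lemma psi15_zero (z : E2') : psi15 z 0 = z 0 := Phi15_symm_zero 0 (m2' z)
lemma psi15_one (z : E2') : psi15 z 1 = z 1 := Phi15_symm_one 0 (m2' z)
lemma psi15_two (z : E2') : psi15 z 2 = 0 := Phi15_symm_two 0 (m2' z)

lemma psi15_isometry : Isometry psi15 := by
  apply Isometry.of_dist_eq
  intro z w
  rw [EuclideanSpace.dist_eq, EuclideanSpace.dist_eq]
  rw [Fin.sum_univ_three, Fin.sum_univ_two]
  simp [psi15_zero, psi15_one, psi15_two]

lemma psi15_memb : MeasurableEmbedding psi15 :=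
  psi15_isometry.isClosedEmbedding.measurableEmbedding

lemma muH_P2 : (μH[2] : Measure P2') = volume := by
  have := MeasureTheory.hausdorffMeasure_pi_real (ι := Fin 2)
  simpa using this

lemma vol_le_muH2 : (volume : Measure E2') ≤ (μH[2] : Measure E2') := by
  rw [Measure.le_iff]
  intro s hs
  have h1 : (volume : Measure E2') s = (volume : Measure P2') (m2' '' s) := by
    have himg : MeasurableSet (m2' '' s) := m2'.measurableSet_image.mpr hs
    have h := (EuclideanSpace.volume_preserving_symm_measurableEquiv_toLp
      (Fin 2)).measure_preimage himg.nullMeasurableSet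
    rwa [show ⇑((MeasurableEquiv.toLp 2 (Fin 2 → ℝ)).symm) = ⇑m2' from rfl,
      Set.preimage_image_eq s m2'.injective] at h
  rw [h1, ← muH_P2]
  have h2 : LipschitzWith 1 (⇑m2') := PiLp.lipschitzWith_ofLp 2 (fun _ : Fin 2 => ℝ)
  have := h2.hausdorffMeasure_image_le (by norm_num : (0:ℝ) ≤ 2) s
  simpa using this

lemma muH_restrict_eq (F : Set E3') (hF : MeasurableSet F) (hFr : F ⊆ Set.range psi15) :
    (μH[2] : Measure E3').restrict F
      = (Measure.map psi15 (μH[2] : Measure E2')).restrict F := by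
  ext B hB
  rw [Measure.restrict_apply hB, Measure.restrict_apply hB,
    Measure.map_apply psi15_memb.measurable (hB.inter hF),
    ← psi15_isometry.hausdorffMeasure_image (Or.inl (by norm_num : (0:ℝ) ≤ 2)),
    Set.image_preimage_eq_inter_range,
    Set.inter_eq_left.mpr ((Set.inter_subset_right).trans hFr)]

lemma setIntegral_muH_transfer (F : Set E3') (hF : MeasurableSet F)
    (hFr : F ⊆ Set.range psi15) (h : E3' → ℝ) :
    ∫ y in F, h y ∂(μH[2] : Measure E3')
      = ∫ z in psi15 ⁻¹' F, h (psi15 z) ∂(μH[2] : Measure E2') := by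
  have e1 : ∫ y in F, h y ∂(μH[2] : Measure E3')
      = ∫ y in F, h y ∂(Measure.map psi15 (μH[2] : Measure E2')) := by
    show ∫ y, h y ∂((μH[2] : Measure E3').restrict F) = _
    rw [muH_restrict_eq F hF hFr]
  rw [e1, psi15_memb.setIntegral_map]

lemma integrableOn_of_bounded {α : Type*} [MeasurableSpace α] {μ : Measure α}
    {s : Set α} (hs : MeasurableSet s) (hμ : μ s ≠ ⊤) {f : α → ℝ}
    (hf : AEStronglyMeasurable f (μ.restrict s)) (C : ℝ) (hC : ∀ x ∈ s, |f x| ≤ C) :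
    IntegrableOn f s μ := by
  haveI : IsFiniteMeasure (μ.restrict s) := by
    constructor; rw [Measure.restrict_apply_univ]; exact hμ.lt_top
  refine memLp_one_iff_integrable.mp (MemLp.of_bound hf C ?_)
  exact (ae_restrict_iff' hs).mpr (Filter.Eventually.of_forall fun x hx => by
    simpa [Real.norm_eq_abs] using hC x hx)

lemma integrable_indicator_of_bounded {α : Type*} [MeasurableSpace α] (μ : Measure α)
    (s : Set α) (hs : MeasurableSet s) (hμ : μ s ≠ ⊤) (f : α → ℝ)
    (hf : AEStronglyMeasurable f (μ.restrict s)) (C : ℝ) (hC : ∀ x ∈ s, |f x| ≤ C) :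
    Integrable (s.indicator f) μ := by
  rw [integrable_indicator_iff hs]
  exact integrableOn_of_bounded hs hμ hf C hC

lemma integral_vol_le_muH (S : Set E2') (hS : IsCompact S)
    (hfin : (μH[2] : Measure E2') S ≠ ⊤) (H : E2' → ℝ) (hH : Continuous H)
    (hH0 : ∀ z, 0 ≤ H z) :
    ∫ z in S, H z ≤ ∫ z in S, H z ∂(μH[2] : Measure E2') := by
  haveI : IsFiniteMeasure ((μH[2] : Measure E2').restrict S) := by
    constructor
    rw [Measure.restrict_apply_univ]
    exact hfin.lt_top
  obtain ⟨C, hC⟩ : ∃ C, ∀ z ∈ S, ‖H z‖ ≤ C := by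
    rcases S.eq_empty_or_nonempty with h | h
    · exact ⟨0, by simp [h]⟩
    · obtain ⟨C, hC⟩ := hS.exists_bound_of_continuousOn hH.continuousOn
      exact ⟨C, hC⟩
  have hInt : Integrable H ((μH[2] : Measure E2').restrict S) := by
    refine memLp_one_iff_integrable.mp ?_
    refine MemLp.of_bound hH.aestronglyMeasurable C ?_
    exact (ae_restrict_iff' hS.measurableSet).mpr (Filter.Eventually.of_forall hC)
  exact integral_mono_measure (Measure.restrict_mono (subset_refl S) vol_le_muH2)
    (Filter.Eventually.of_forall fun z => hH0 z) hInt

lemma sqrt_add_le' {x y : ℝ} (hx : 0 ≤ x) (hy : 0 ≤ y) :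
    Real.sqrt (x + y) ≤ Real.sqrt x + Real.sqrt y := by
  rw [← Real.sqrt_sq (by positivity : (0:ℝ) ≤ Real.sqrt x + Real.sqrt y)]
  apply Real.sqrt_le_sqrt
  nlinarith [Real.sq_sqrt hx, Real.sq_sqrt hy, Real.sqrt_nonneg x, Real.sqrt_nonneg y]

/-- Cauchy–Schwarz on `Ioc 0 t`. -/
lemma sq_setIntegral_le {t : ℝ} (ht : 0 ≤ t) {h : ℝ → ℝ} (hc : Continuous h) :
    (∫ s in Set.Ioc 0 t, h s) ^ 2 ≤ t * ∫ s in Set.Ioc 0 t, (h s) ^ 2 := by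
  set μ := volume.restrict (Set.Ioc (0:ℝ) t) with hμ
  haveI : IsFiniteMeasure μ := by
    constructor
    rw [hμ, Measure.restrict_apply_univ, Real.volume_Ioc]
    exact ENNReal.ofReal_lt_top
  have hconj : Real.HolderConjugate 2 2 := ⟨by norm_num, by norm_num, by norm_num⟩
  obtain ⟨C, hC⟩ : ∃ C, ∀ x ∈ Set.Icc (0:ℝ) t, ‖h x‖ ≤ C := by
    obtain ⟨C, hC⟩ := (isCompact_Icc (a := (0:ℝ)) (b := t)).exists_bound_of_continuousOn
      hc.continuousOn
    exact ⟨C, hC⟩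
  have hmem : MemLp (fun s => |h s|) (ENNReal.ofReal 2) μ := by
    refine MemLp.of_bound hc.abs.aestronglyMeasurable C ?_
    rw [hμ]
    exact (ae_restrict_iff' measurableSet_Ioc).mpr (Filter.Eventually.of_forall fun x hx => by
      simpa using hC x (Set.Ioc_subset_Icc_self hx))
  have hone : MemLp (fun _ : ℝ => (1:ℝ)) (ENNReal.ofReal 2) μ := memLp_const 1
  have key := integral_mul_le_Lp_mul_Lq_of_nonneg hconj
    (Filter.Eventually.of_forall fun x => abs_nonneg (h x))
    (Filter.Eventually.of_forall fun _ => zero_le_one) hmem hone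
  simp only [mul_one, Real.one_rpow] at key
  have h1 : (∫ s, |h s| ^ (2:ℝ) ∂μ) = ∫ s in Set.Ioc 0 t, (h s)^2 := by
    rw [hμ]
    refine integral_congr_ae (Filter.Eventually.of_forall fun s => ?_)
    show |h s| ^ (2:ℝ) = h s ^ 2
    rw [show ((2:ℝ)) = ((2:ℕ):ℝ) by norm_num, Real.rpow_natCast, sq_abs]
  have h2 : (∫ _ : ℝ, (1:ℝ) ∂μ) = t := by
    rw [integral_const, smul_eq_mul, mul_one, hμ, measureReal_def, Measure.restrict_apply_univ, Real.volume_Ioc,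
      ENNReal.toReal_ofReal (by linarith)]
    ring
  have habs : (∫ s in Set.Ioc 0 t, h s) ^ 2 ≤ (∫ s, |h s| ∂μ) ^ 2 := by
    rw [← sq_abs (∫ s in Set.Ioc 0 t, h s)]
    have hh : |∫ s, h s ∂μ| ≤ ∫ s, |h s| ∂μ := by
      simpa [Real.norm_eq_abs] using norm_integral_le_integral_norm (f := h) (μ := μ)
    exact pow_le_pow_left₀ (abs_nonneg _) (by rw [hμ] at hh ⊢; exact hh) 2
  have hnn : 0 ≤ ∫ s in Set.Ioc 0 t, (h s)^2 :=
    integral_nonneg fun s => sq_nonneg _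
  calc (∫ s in Set.Ioc 0 t, h s) ^ 2 ≤ (∫ s, |h s| ∂μ) ^ 2 := habs
    _ ≤ ((∫ s, |h s| ^ (2:ℝ) ∂μ) ^ (1/2:ℝ) * (∫ _, (1:ℝ) ∂μ) ^ (1/2:ℝ))^2 := by
        exact pow_le_pow_left₀ (integral_nonneg fun s => abs_nonneg _) key 2
    _ = (∫ s, |h s| ^ (2:ℝ) ∂μ) * (∫ _, (1:ℝ) ∂μ) := by
        rw [mul_pow]
        rw [← Real.rpow_natCast ((∫ s, |h s| ^ (2:ℝ) ∂μ) ^ (1/2:ℝ)) 2,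
          ← Real.rpow_natCast ((∫ _, (1:ℝ) ∂μ) ^ (1/2:ℝ)) 2,
          ← Real.rpow_mul (by rw [h1]; exact hnn),
          ← Real.rpow_mul (by rw [h2]; exact ht)]
        norm_num
    _ = t * ∫ s in Set.Ioc 0 t, (h s)^2 := by rw [h1, h2, mul_comm]

/-- FTC along a line. -/
lemma ftc_line {E : Type*} [NormedAddCommGroup E] [NormedSpace ℝ E]
    {u : E → ℝ} (hu : ContDiff ℝ 1 u) (a d : E) (t : ℝ) :
    u (a + t • d) - u a = ∫ s in (0:ℝ)..t, (fderiv ℝ u (a + s • d)) d := by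
  have hcont : Continuous fun s : ℝ => (fderiv ℝ u (a + s • d)) d := by
    have h1 : Continuous fun s : ℝ => a + s • d := by continuity
    exact ((hu.continuous_fderiv one_ne_zero).comp h1).clm_apply continuous_const
  have hderiv : ∀ s ∈ Set.uIcc (0:ℝ) t,
      HasDerivAt (fun s : ℝ => u (a + s • d)) ((fderiv ℝ u (a + s • d)) d) s := by
    intro s _
    have h1 : HasDerivAt (fun s : ℝ => a + s • d) d s := by
      simpa using ((hasDerivAt_id s).smul_const d).const_add a
    have h2 := (hu.differentiable one_ne_zero (a + s • d)).hasFDerivAt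
    exact h2.comp_hasDerivAt s h1
  rw [intervalIntegral.integral_eq_sub_of_hasDerivAt hderiv
    (hcont.intervalIntegrable (μ := volume) 0 t)]
  simp

lemma ext3 {x y : E3'} (h0 : x 0 = y 0) (h1 : x 1 = y 1) (h2 : x 2 = y 2) : x = y := by
  ext i
  fin_cases i <;> assumption

end Stmt15Aux
set_option maxHeartbeats 1000000

/-- degenerate-direction projection bound for a prism-like element:
let `K̂ ⊆ ℝ³` be a convex polyhedron with a face `F̂` in the plane `{x₃ = 0}` equal to
the vertical projection of `K̂`, with supporting height `l`.  Then for `u ∈ H¹(K̂)`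
(represented by a `C¹` function) and `v = u − P⁰_{F̂} u` (the mean over `F̂` taken with
respect to the surface measure `μH[2]`),
`‖v‖_{L²(K̂)} ≤ √2 l^{1/2} ‖v‖_{L²(F̂)} + √2 l ‖∇u‖_{L²(K̂)}`. -/
theorem stmt15
    (Khat : Set (EuclideanSpace ℝ (Fin 3)))
    (hKconv : Convex ℝ Khat) (hKcomp : IsCompact Khat) (hKne : (interior Khat).Nonempty)
    (Fhat : Set (EuclideanSpace ℝ (Fin 3)))
    (hFK : Fhat ⊆ Khat)
    (hFplane : ∀ y ∈ Fhat, y 2 = 0)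
    (hFarea : 0 < (μH[2] Fhat).toReal)
    (l : ℝ) (hl : 0 ≤ l)
    (hheight : ∀ x ∈ Khat, 0 ≤ x 2 ∧ x 2 ≤ l)
    (hproj : ∀ x ∈ Khat, ∃ y ∈ Fhat, y 0 = x 0 ∧ y 1 = x 1)
    (u : EuclideanSpace ℝ (Fin 3) → ℝ)
    (hu : ContDiff ℝ 1 u) :
    Real.sqrt (∫ x in Khat,
        (u x - ((μH[2] Fhat).toReal)⁻¹ * (∫ y in Fhat, u y ∂(μH[2]))) ^ 2)
      ≤ Real.sqrt 2 * Real.sqrt l *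
          Real.sqrt (∫ y in Fhat,
            (u y - ((μH[2] Fhat).toReal)⁻¹ * (∫ z in Fhat, u z ∂(μH[2]))) ^ 2 ∂(μH[2]))
        + Real.sqrt 2 * l * Real.sqrt (∫ x in Khat, ‖fderiv ℝ u x‖ ^ 2) := by
  classical
  set c : ℝ := ((μH[2] Fhat).toReal)⁻¹ * (∫ y in Fhat, u y ∂(μH[2])) with hc
  have hucont : Continuous u := hu.continuous
  have hx2cont : Continuous fun x : E3' => x 2 :=
    (continuous_apply (2 : Fin 3)).comp (PiLp.continuous_ofLp 2 (fun _ : Fin 3 => ℝ))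
  -- the face is compact
  have hFeq : Fhat = Khat ∩ {x : E3' | x 2 = 0} := by
    apply Set.Subset.antisymm
    · exact fun y hy => ⟨hFK hy, hFplane y hy⟩
    · rintro x ⟨hxK, hx2⟩
      obtain ⟨y, hyF, hy0, hy1⟩ := hproj x hxK
      have hyx : y = x := ext3 hy0 hy1 (by rw [hFplane y hyF, hx2])
      rwa [← hyx]
  have hFcomp : IsCompact Fhat := by
    rw [hFeq]
    exact hKcomp.inter_right (isClosed_eq hx2cont continuous_const)
  have hFmeas : MeasurableSet Fhat := hFcomp.isClosed.measurableSet
  have hKmeas : MeasurableSet Khat := hKcomp.isClosed.measurableSet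
  have hFrange : Fhat ⊆ Set.range psi15 := by
    intro y hy
    refine ⟨m2'.symm (Phi15 y).2, ?_⟩
    show Phi15.symm (0, m2' (m2'.symm (Phi15 y).2)) = y
    rw [MeasurableEquiv.apply_symm_apply]
    have h := Phi15_symm_surj y
    rwa [hFplane y hy] at h
  set S : Set E2' := psi15 ⁻¹' Fhat with hS
  have hSimg : psi15 '' S = Fhat := by
    rw [hS, Set.image_preimage_eq_inter_range, Set.inter_eq_left.mpr hFrange]
  have hScomp : IsCompact S := by
    rw [Metric.isCompact_iff_isClosed_bounded]
    constructor
    · exact hFcomp.isClosed.preimage psi15_isometry.continuous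
    · obtain ⟨C, hC⟩ := Metric.isBounded_iff.mp hFcomp.isBounded
      refine Metric.isBounded_iff.mpr ⟨C, fun z hz w hw => ?_⟩
      rw [← psi15_isometry.dist_eq]
      exact hC (by rwa [hS] at hz) (by rwa [hS] at hw)
  have hmuF_ne : (μH[2] : Measure E3') Fhat ≠ ⊤ := by
    intro h
    rw [h] at hFarea
    simp at hFarea
  have hmuS : (μH[2] : Measure E2') S = (μH[2] : Measure E3') Fhat := by
    rw [← hSimg, psi15_isometry.hausdorffMeasure_image (Or.inl (by norm_num : (0:ℝ) ≤ 2))]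
  -- the product-space picture
  set Q : Set (ℝ × P2') := ⇑Phi15 '' Khat with hQ
  have hQpre : Q = ⇑Phi15.symm ⁻¹' Khat := by rw [hQ, MeasurableEquiv.image_eq_preimage_symm]
  have hQcomp : IsCompact Q := hKcomp.image Phi15_cont
  have hQmeas : MeasurableSet Q := hQcomp.isClosed.measurableSet
  have hPsm : MeasurePreserving (⇑Phi15.symm)
      ((volume : Measure ℝ).prod (volume : Measure P2')) volume := Phi15_mp.symm Phi15
  have hQvol : ((volume : Measure ℝ).prod (volume : Measure P2')) Q ≠ ⊤ := by
    rw [hQpre, hPsm.measure_preimage hKmeas.nullMeasurableSet]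
    exact hKcomp.measure_lt_top.ne
  set e3 : E3' := EuclideanSpace.single (2 : Fin 3) (1:ℝ) with he3
  have he3norm : ‖e3‖ = 1 := by rw [he3, EuclideanSpace.norm_single]; norm_num
  set f1 : ℝ × P2' → ℝ := fun z => (u (Phi15.symm z) - c)^2 with hf1
  set f2 : ℝ × P2' → ℝ := fun z => ‖fderiv ℝ u (Phi15.symm z)‖^2 with hf2
  have hf1cont : Continuous f1 := ((hucont.comp Phi15_cont_symm).sub continuous_const).pow 2
  have hf2cont : Continuous f2 := (((hu.continuous_fderiv one_ne_zero).comp Phi15_cont_symm).norm).pow 2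
  obtain ⟨C1, hC1⟩ := hQcomp.exists_bound_of_continuousOn hf1cont.continuousOn
  obtain ⟨C2, hC2⟩ := hQcomp.exists_bound_of_continuousOn hf2cont.continuousOn
  set FF : ℝ × P2' → ℝ := Q.indicator f1 with hFF
  set GG : ℝ × P2' → ℝ := Q.indicator f2 with hGG
  have hFFint : Integrable FF ((volume : Measure ℝ).prod (volume : Measure P2')) :=
    integrable_indicator_of_bounded _ Q hQmeas hQvol f1 hf1cont.aestronglyMeasurable C1
      (fun z hz => by simpa [Real.norm_eq_abs] using hC1 z hz)
  have hGGint : Integrable GG ((volume : Measure ℝ).prod (volume : Measure P2')) :=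
    integrable_indicator_of_bounded _ Q hQmeas hQvol f2 hf2cont.aestronglyMeasurable C2
      (fun z hz => by simpa [Real.norm_eq_abs] using hC2 z hz)
  have hf2nn : ∀ z, 0 ≤ f2 z := fun z => by rw [hf2]; positivity
  have hGGnn : ∀ z, 0 ≤ GG z := fun z => Set.indicator_nonneg (fun w _ => hf2nn w) z
  have hGGbdd : ∀ z, |GG z| ≤ max C2 0 := by
    intro z
    by_cases h : z ∈ Q
    · rw [hGG, Set.indicator_of_mem h]
      exact le_trans (by simpa [Real.norm_eq_abs] using hC2 z h) (le_max_left _ _)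
    · rw [hGG, Set.indicator_of_notMem h]
      simp
  have hGGmeas : Measurable GG := hf2cont.measurable.indicator hQmeas
  -- transfer the volume integrals
  have hA : ∫ x in Khat, (u x - c)^2
      = ∫ z, FF z ∂((volume : Measure ℝ).prod (volume : Measure P2')) := by
    rw [hFF, integral_indicator hQmeas, hQ,
      Phi15_mp.setIntegral_image_emb Phi15.measurableEmbedding f1 Khat]
    refine setIntegral_congr_fun hKmeas (fun x _ => ?_)
    rw [hf1]
    simp
  have hCeq : ∫ x in Khat, ‖fderiv ℝ u x‖^2
      = ∫ z, GG z ∂((volume : Measure ℝ).prod (volume : Measure P2')) := by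
    rw [hGG, integral_indicator hQmeas, hQ,
      Phi15_mp.setIntegral_image_emb Phi15.measurableEmbedding f2 Khat]
    refine setIntegral_congr_fun hKmeas (fun x _ => ?_)
    rw [hf2]
    simp
  -- the base region D in the plane
  set D : Set P2' := ⇑m2' '' S with hD
  have hDmem : ∀ q : P2', q ∈ D ↔ Phi15.symm (0, q) ∈ Fhat := by
    intro q
    constructor
    · rintro ⟨z, hz, rfl⟩
      exact hz
    · intro hq
      refine ⟨m2'.symm q, ?_, MeasurableEquiv.apply_symm_apply _ _⟩
      show psi15 (m2'.symm q) ∈ Fhat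
      show Phi15.symm (0, m2' (m2'.symm q)) ∈ Fhat
      rwa [MeasurableEquiv.apply_symm_apply]
  have hDcomp : IsCompact D := hScomp.image (PiLp.continuous_ofLp 2 (fun _ : Fin 2 => ℝ))
  have hDmeas : MeasurableSet D := hDcomp.isClosed.measurableSet
  have hDvol : (volume : Measure P2') D ≠ ⊤ := hDcomp.measure_lt_top.ne
  set f0 : P2' → ℝ := fun q => (u (Phi15.symm (0, q)) - c)^2 with hf0
  have hf0cont : Continuous f0 := by
    rw [hf0]
    exact ((hucont.comp (Phi15_cont_symm.comp
      (continuous_const.prodMk continuous_id))).sub continuous_const).pow 2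
  have hf0nn : ∀ q, 0 ≤ f0 q := fun q => by rw [hf0]; positivity
  obtain ⟨C0, hC0⟩ := hDcomp.exists_bound_of_continuousOn hf0cont.continuousOn
  have hIndInt : Integrable (D.indicator f0) (volume : Measure P2') :=
    integrable_indicator_of_bounded _ D hDmeas hDvol f0 hf0cont.aestronglyMeasurable C0
      (fun q hq => by simpa [Real.norm_eq_abs] using hC0 q hq)
  have hIndnn : ∀ q, 0 ≤ D.indicator f0 q := fun q =>
    Set.indicator_nonneg (fun w _ => hf0nn w) q
  -- the vertical-derivative weight W
  set QH : Set (ℝ × P2') := (Set.Ioc (0:ℝ) l ×ˢ (Set.univ : Set P2')) ∩ Q with hQH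
  have hQHmeas : MeasurableSet QH := (measurableSet_Ioc.prod MeasurableSet.univ).inter hQmeas
  have hQHvol : ((volume : Measure ℝ).prod (volume : Measure P2')) QH ≠ ⊤ :=
    ((measure_mono Set.inter_subset_right).trans_lt hQvol.lt_top).ne
  set HH : ℝ × P2' → ℝ := QH.indicator f2 with hHH
  have hHHint : Integrable HH ((volume : Measure ℝ).prod (volume : Measure P2')) :=
    integrable_indicator_of_bounded _ QH hQHmeas hQHvol f2 hf2cont.aestronglyMeasurable C2
      (fun z hz => by simpa [Real.norm_eq_abs] using hC2 z hz.2)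
  have hHHle : ∀ z, HH z ≤ GG z := fun z => by
    rw [hHH, hGG]
    exact Set.indicator_le_indicator_of_subset Set.inter_subset_right hf2nn z
  have hHHGG : ∀ (s : ℝ) (q : P2'),
      HH (s, q) = (Set.Ioc (0:ℝ) l).indicator (fun s => GG (s, q)) s := by
    intro s q
    by_cases h1 : s ∈ Set.Ioc (0:ℝ) l <;> by_cases h2 : (s, q) ∈ Q <;>
      simp [hHH, hGG, hQH, Set.indicator_apply, h1, h2, Set.mem_prod]
  set W : P2' → ℝ := fun q => ∫ s, HH (s, q) ∂(volume : Measure ℝ) with hW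
  have hWint : Integrable W (volume : Measure P2') := hHHint.integral_prod_right
  have hWnn : ∀ q, 0 ≤ W q := fun q =>
    integral_nonneg fun s => Set.indicator_nonneg (fun w _ => hf2nn w) _
  have hWC : ∫ q, W q ∂(volume : Measure P2')
      ≤ ∫ z, GG z ∂((volume : Measure ℝ).prod (volume : Measure P2')) := by
    rw [hW, ← integral_prod_symm HH hHHint]
    exact integral_mono hHHint hGGint hHHle
  -- the slice estimate
  have hslice : ∀ q : P2', (∫ t, FF (t, q) ∂(volume : Measure ℝ))
      ≤ 2*l*(D.indicator f0 q) + 2*l^2 * W q := by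
    intro q
    set T : Set ℝ := {t : ℝ | (t, q) ∈ Q} with hT
    have hTmeas : MeasurableSet T := hQmeas.preimage (measurable_id.prodMk measurable_const)
    have hFFq : (fun t : ℝ => FF (t, q)) = T.indicator (fun t => f1 (t, q)) := by
      funext t
      by_cases h : (t, q) ∈ Q
      · rw [hFF, Set.indicator_of_mem h, Set.indicator_of_mem (by rwa [hT, Set.mem_setOf_eq])]
      · rw [hFF, Set.indicator_of_notMem h,
          Set.indicator_of_notMem (by rwa [hT, Set.mem_setOf_eq])]
    have hTsub : T ⊆ Set.Icc 0 l := by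
      intro t ht
      have hx : Phi15.symm (t, q) ∈ Khat := by
        rw [hT, Set.mem_setOf_eq, hQpre] at ht; exact ht
      have hh := hheight _ hx
      rw [Phi15_symm_two] at hh
      exact Set.mem_Icc.mpr hh
    have hTvol : volume T ≤ ENNReal.ofReal l := by
      calc volume T ≤ volume (Set.Icc (0:ℝ) l) := measure_mono hTsub
      _ = ENNReal.ofReal l := by rw [Real.volume_Icc, sub_zero]
    have hTfin : volume T ≠ ⊤ := (hTvol.trans_lt ENNReal.ofReal_lt_top).ne
    rw [hFFq, integral_indicator hTmeas]
    rcases Set.eq_empty_or_nonempty T with hTe | ⟨t0, ht0⟩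
    · rw [hTe]
      simp only [Measure.restrict_empty, integral_zero_measure]
      exact add_nonneg (mul_nonneg (by positivity) (hIndnn q))
        (mul_nonneg (by positivity) (hWnn q))
    · have hx0 : Phi15.symm (t0, q) ∈ Khat := by
        rw [hT, Set.mem_setOf_eq, hQpre] at ht0; exact ht0
      obtain ⟨y, hyF, hy0, hy1⟩ := hproj _ hx0
      have hyq : y = Phi15.symm (0, q) := by
        refine ext3 ?_ ?_ ?_
        · rw [hy0, Phi15_symm_zero, Phi15_symm_zero]
        · rw [hy1, Phi15_symm_one, Phi15_symm_one]
        · rw [hFplane y hyF, Phi15_symm_two]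
      have hσF : Phi15.symm (0, q) ∈ Fhat := hyq ▸ hyF
      have hqD : q ∈ D := (hDmem q).mpr hσF
      have hσK : Phi15.symm (0, q) ∈ Khat := hFK hσF
      -- pointwise bound on the slice
      have hkey : ∀ t ∈ T, f1 (t, q) ≤ 2 * f0 q + 2 * (l * W q) := by
        intro t ht
        have hx : Phi15.symm (t, q) ∈ Khat := by
          rw [hT, Set.mem_setOf_eq, hQpre] at ht; exact ht
        have htIcc := hTsub ht
        have ht0' : 0 ≤ t := htIcc.1
        have htl : t ≤ l := htIcc.2
        have hseg : ∀ s ∈ Set.Ioc (0:ℝ) t, Phi15.symm (s, q) ∈ Khat := by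
          intro s hs
          have htpos : 0 < t := lt_of_lt_of_le hs.1 hs.2
          have htne : t ≠ 0 := ne_of_gt htpos
          have hcomb : Phi15.symm (s, q)
              = (1 - s/t) • Phi15.symm (0, q) + (s/t) • Phi15.symm (t, q) := by
            rw [Phi15_symm_decomp s q, Phi15_symm_decomp t q]
            match_scalars
            · ring
            · field_simp
          rw [hcomb]
          exact hKconv hσK hx (sub_nonneg.mpr ((div_le_one htpos).mpr hs.2))
            (div_pos hs.1 htpos).le (by ring)
        have hftc : u (Phi15.symm (t, q)) - u (Phi15.symm (0, q))
            = ∫ s in (0:ℝ)..t, (fderiv ℝ u (Phi15.symm (s, q))) e3 := by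
          have h := ftc_line hu (Phi15.symm (0, q)) e3 t
          rw [← Phi15_symm_decomp t q] at h
          rw [h]
          apply intervalIntegral.integral_congr
          intro s _
          simp only [he3]
          rw [← Phi15_symm_decomp s q]
        have hhcont : Continuous fun s : ℝ => (fderiv ℝ u (Phi15.symm (s, q))) e3 :=
          (((hu.continuous_fderiv one_ne_zero).comp
            (Phi15_cont_symm.comp (continuous_id.prodMk continuous_const)))).clm_apply
            continuous_const
        have hIoc : (∫ s in (0:ℝ)..t, (fderiv ℝ u (Phi15.symm (s, q))) e3)
            = ∫ s in Set.Ioc (0:ℝ) t, (fderiv ℝ u (Phi15.symm (s, q))) e3 :=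
          intervalIntegral.integral_of_le ht0'
        have hCS := sq_setIntegral_le ht0' hhcont
        have hptb : ∀ s ∈ Set.Ioc (0:ℝ) t,
            ((fderiv ℝ u (Phi15.symm (s, q))) e3)^2 ≤ GG (s, q) := by
          intro s hs
          have hsQ : (s, q) ∈ Q := by rw [hQpre]; exact hseg s hs
          rw [hGG, Set.indicator_of_mem hsQ, hf2]
          have hb : |(fderiv ℝ u (Phi15.symm (s, q))) e3|
              ≤ ‖fderiv ℝ u (Phi15.symm (s, q))‖ := by
            have h := (fderiv ℝ u (Phi15.symm (s, q))).le_opNorm e3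
            rw [he3norm, mul_one, Real.norm_eq_abs] at h
            exact h
          calc ((fderiv ℝ u (Phi15.symm (s, q))) e3)^2
              = |(fderiv ℝ u (Phi15.symm (s, q))) e3|^2 := (sq_abs _).symm
            _ ≤ ‖fderiv ℝ u (Phi15.symm (s, q))‖^2 := pow_le_pow_left₀ (abs_nonneg _) hb 2
        have hGGsm : ∀ r : ℝ, AEStronglyMeasurable (fun s : ℝ => GG (s, q))
            (volume.restrict (Set.Ioc (0:ℝ) r)) := fun r =>
          ((hGGmeas.comp (measurable_id.prodMk measurable_const))).aestronglyMeasurable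
        have hGGint_t : IntegrableOn (fun s : ℝ => GG (s, q)) (Set.Ioc 0 t) volume :=
          integrableOn_of_bounded measurableSet_Ioc
            (by rw [Real.volume_Ioc]; exact ENNReal.ofReal_ne_top) (hGGsm t) (max C2 0)
            (fun s _ => hGGbdd (s, q))
        have hGGint_l : IntegrableOn (fun s : ℝ => GG (s, q)) (Set.Ioc 0 l) volume :=
          integrableOn_of_bounded measurableSet_Ioc
            (by rw [Real.volume_Ioc]; exact ENNReal.ofReal_ne_top) (hGGsm l) (max C2 0)
            (fun s _ => hGGbdd (s, q))
        have h1 : (∫ s in Set.Ioc (0:ℝ) t, ((fderiv ℝ u (Phi15.symm (s, q))) e3)^2)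
            ≤ ∫ s in Set.Ioc (0:ℝ) t, GG (s, q) :=
          setIntegral_mono_on ((hhcont.pow 2).integrableOn_Ioc) hGGint_t measurableSet_Ioc hptb
        have h2 : (∫ s in Set.Ioc (0:ℝ) t, GG (s, q)) ≤ W q := by
          have h3 : (∫ s in Set.Ioc (0:ℝ) t, GG (s, q)) ≤ ∫ s in Set.Ioc (0:ℝ) l, GG (s, q) :=
            setIntegral_mono_set hGGint_l
              (Filter.Eventually.of_forall fun s => hGGnn (s, q))
              (HasSubset.Subset.eventuallyLE (Set.Ioc_subset_Ioc_right htl))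
          refine h3.trans (le_of_eq ?_)
          rw [hW, ← integral_indicator measurableSet_Ioc]
          exact integral_congr_ae (Filter.Eventually.of_forall fun s => (hHHGG s q).symm)
        have hIsq : (∫ s in (0:ℝ)..t, (fderiv ℝ u (Phi15.symm (s, q))) e3)^2 ≤ l * W q := by
          rw [hIoc]
          calc (∫ s in Set.Ioc (0:ℝ) t, (fderiv ℝ u (Phi15.symm (s, q))) e3)^2
              ≤ t * ∫ s in Set.Ioc (0:ℝ) t, ((fderiv ℝ u (Phi15.symm (s, q))) e3)^2 := hCS
            _ ≤ t * W q := mul_le_mul_of_nonneg_left (h1.trans h2) ht0'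
            _ ≤ l * W q := mul_le_mul_of_nonneg_right htl (hWnn q)
        have hdec : u (Phi15.symm (t, q)) - c = (u (Phi15.symm (0, q)) - c)
            + (∫ s in (0:ℝ)..t, (fderiv ℝ u (Phi15.symm (s, q))) e3) := by
          rw [← hftc]; ring
        rw [hf1, hf0]
        show (u (Phi15.symm (t, q)) - c)^2 ≤ 2 * (u (Phi15.symm (0, q)) - c)^2 + 2 * (l * W q)
        rw [hdec]
        nlinarith [sq_nonneg ((u (Phi15.symm (0, q)) - c)
          - (∫ s in (0:ℝ)..t, (fderiv ℝ u (Phi15.symm (s, q))) e3)), hIsq]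
      -- integrate the pointwise bound over the slice
      have hint1 : IntegrableOn (fun t => f1 (t, q)) T volume := by
        refine integrableOn_of_bounded hTmeas hTfin
          ((hf1cont.comp (continuous_id.prodMk continuous_const)).aestronglyMeasurable) C1 ?_
        intro t ht
        have : (t, q) ∈ Q := by rwa [hT, Set.mem_setOf_eq] at ht
        simpa [Real.norm_eq_abs] using hC1 (t, q) this
      have hint2 : IntegrableOn (fun _ : ℝ => 2 * f0 q + 2 * (l * W q)) T volume :=
        integrableOn_const hTfin
      have hJ : ∫ t in T, f1 (t, q) ≤ (volume T).toReal * (2 * f0 q + 2 * (l * W q)) := by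
        calc ∫ t in T, f1 (t, q) ≤ ∫ _ in T, (2 * f0 q + 2 * (l * W q)) :=
            setIntegral_mono_on hint1 hint2 hTmeas hkey
          _ = (volume T).toReal * (2 * f0 q + 2 * (l * W q)) := by
            rw [setIntegral_const, smul_eq_mul, measureReal_def]
      have hTle : (volume T).toReal ≤ l := ENNReal.toReal_le_of_le_ofReal hl hTvol
      calc ∫ t in T, f1 (t, q) ≤ (volume T).toReal * (2 * f0 q + 2 * (l * W q)) := hJ
        _ ≤ l * (2 * f0 q + 2 * (l * W q)) := by
            refine mul_le_mul_of_nonneg_right hTle ?_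
            exact add_nonneg (mul_nonneg (by norm_num) (hf0nn q))
              (mul_nonneg (by norm_num) (mul_nonneg hl (hWnn q)))
        _ = 2*l*(D.indicator f0 q) + 2*l^2 * W q := by
            rw [Set.indicator_of_mem hqD]; ring
  -- assemble
  have hmono : ∫ q, (∫ t, FF (t, q) ∂(volume : Measure ℝ)) ∂(volume : Measure P2')
      ≤ ∫ q, (2*l*(D.indicator f0 q) + 2*l^2 * W q) ∂(volume : Measure P2') :=
    integral_mono hFFint.integral_prod_right
      (((hIndInt.const_mul (2*l))).add (hWint.const_mul (2*l^2))) (fun q => hslice q)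
  have hsplit : ∫ q, (2*l*(D.indicator f0 q) + 2*l^2 * W q) ∂(volume : Measure P2')
      = 2*l*(∫ q in D, f0 q ∂(volume : Measure P2'))
        + 2*l^2*(∫ q, W q ∂(volume : Measure P2')) := by
    rw [integral_add ((hIndInt.const_mul (2*l))) (hWint.const_mul (2*l^2)),
      integral_const_mul, integral_const_mul, integral_indicator hDmeas]
  have hfaceeq : ∫ q in D, f0 q ∂(volume : Measure P2')
      = ∫ z in S, (u (psi15 z) - c)^2 ∂(volume : Measure E2') := by
    rw [hD]
    have h := (EuclideanSpace.volume_preserving_symm_measurableEquiv_toLp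
      (Fin 2)).setIntegral_image_emb m2'.measurableEmbedding f0 S
    rw [show ⇑((MeasurableEquiv.toLp 2 (Fin 2 → ℝ)).symm) = ⇑m2' from rfl] at h
    rw [h]
    rfl
  have hface2 : ∫ z in S, (u (psi15 z) - c)^2 ∂(volume : Measure E2')
      ≤ ∫ z in S, (u (psi15 z) - c)^2 ∂(μH[2] : Measure E2') :=
    integral_vol_le_muH S hScomp (by rw [hmuS]; exact hmuF_ne) _
      (((hucont.comp psi15_isometry.continuous).sub continuous_const).pow 2)
      (fun z => sq_nonneg _)
  have hface3 : ∫ z in S, (u (psi15 z) - c)^2 ∂(μH[2] : Measure E2')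
      = ∫ y in Fhat, (u y - c)^2 ∂(μH[2] : Measure E3') :=
    (setIntegral_muH_transfer Fhat hFmeas hFrange (fun y => (u y - c)^2)).symm
  have hmain : (∫ x in Khat, (u x - c)^2)
      ≤ 2*l*(∫ y in Fhat, (u y - c)^2 ∂(μH[2]))
        + 2*l^2*(∫ x in Khat, ‖fderiv ℝ u x‖^2) := by
    calc (∫ x in Khat, (u x - c)^2)
        = ∫ z, FF z ∂((volume : Measure ℝ).prod (volume : Measure P2')) := hA
      _ = ∫ q, (∫ t, FF (t, q) ∂(volume : Measure ℝ)) ∂(volume : Measure P2') :=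
          integral_prod_symm FF hFFint
      _ ≤ ∫ q, (2*l*(D.indicator f0 q) + 2*l^2 * W q) ∂(volume : Measure P2') := hmono
      _ = 2*l*(∫ q in D, f0 q ∂(volume : Measure P2'))
            + 2*l^2*(∫ q, W q ∂(volume : Measure P2')) := hsplit
      _ ≤ 2*l*(∫ y in Fhat, (u y - c)^2 ∂(μH[2]))
            + 2*l^2*(∫ x in Khat, ‖fderiv ℝ u x‖^2) := by
          have e1 : ∫ q in D, f0 q ∂(volume : Measure P2')
              ≤ ∫ y in Fhat, (u y - c)^2 ∂(μH[2]) := by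
            rw [hfaceeq]
            exact hface2.trans (le_of_eq hface3)
          have e2 : ∫ q, W q ∂(volume : Measure P2')
              ≤ ∫ x in Khat, ‖fderiv ℝ u x‖^2 := by
            rw [hCeq]
            exact hWC
          exact add_le_add (mul_le_mul_of_nonneg_left e1 (by positivity))
            (mul_le_mul_of_nonneg_left e2 (by positivity))
  have hAnn : 0 ≤ ∫ x in Khat, (u x - c)^2 := integral_nonneg fun x => sq_nonneg _
  have hBnn : 0 ≤ ∫ y in Fhat, (u y - c)^2 ∂(μH[2]) := integral_nonneg fun y => sq_nonneg _
  have hCnn : 0 ≤ ∫ x in Khat, ‖fderiv ℝ u x‖^2 := integral_nonneg fun x => by positivity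
  calc Real.sqrt (∫ x in Khat, (u x - c)^2)
      ≤ Real.sqrt (2*l*(∫ y in Fhat, (u y - c)^2 ∂(μH[2]))
          + 2*l^2*(∫ x in Khat, ‖fderiv ℝ u x‖^2)) := Real.sqrt_le_sqrt hmain
    _ ≤ Real.sqrt (2*l*(∫ y in Fhat, (u y - c)^2 ∂(μH[2])))
          + Real.sqrt (2*l^2*(∫ x in Khat, ‖fderiv ℝ u x‖^2)) :=
        sqrt_add_le' (by positivity) (by positivity)
    _ = Real.sqrt 2 * Real.sqrt l * Real.sqrt (∫ y in Fhat, (u y - c)^2 ∂(μH[2]))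
          + Real.sqrt 2 * l * Real.sqrt (∫ x in Khat, ‖fderiv ℝ u x‖^2) := by
        rw [show (2*l : ℝ) = 2*l by ring, Real.sqrt_mul (by positivity : (0:ℝ) ≤ 2*l),
          Real.sqrt_mul (by norm_num : (0:ℝ) ≤ 2) l,
          Real.sqrt_mul (by positivity : (0:ℝ) ≤ 2*l^2),
          Real.sqrt_mul (by norm_num : (0:ℝ) ≤ 2) (l^2),
          Real.sqrt_sq hl]
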